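/- With T_k and g as defined (g(1)=2, g(k)=((k+1)/2)(g(k-2)-1)+1 for odd k≥3), the chordal bipartite graph G_k = T_k^[k] satisfies box(G_k) > (k+1)/4. -/

import Mathlib

open SimpleGraph Set

/-- `f` given by endpoint functions `a`, `b` is an interval representation of `I`. -/
def IsIntervalRep {V : Type*} (I : SimpleGraph V) (a b : V → ℝ) : Prop :=
  (∀ v, a v ≤ b v) ∧
    ∀ u v, I.Adj u v ↔ u ≠ v ∧ (Set.Icc (a u) (b u) ∩ Set.Icc (a v) (b v)).Nonempty

/-- `I` is an interval graph. -/
def IsIntervalGraph {V : Type*} (I : SimpleGraph V) : Prop :=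
  ∃ a b : V → ℝ, IsIntervalRep I a b

/-- `G` is the intersection graph of axis-parallel `k`-dimensional boxes. -/
def IsBoxRep {V : Type*} (G : SimpleGraph V) (k : ℕ) : Prop :=
  ∃ lo hi : V → Fin k → ℝ, (∀ v i, lo v i ≤ hi v i) ∧
    ∀ u v, G.Adj u v ↔ u ≠ v ∧
      ∀ i, (Set.Icc (lo u i) (hi u i) ∩ Set.Icc (lo v i) (hi v i)).Nonempty

/-- The boxicity of a graph: the least `k` such that `G` is an intersection graph of
axis-parallel `k`-dimensional boxes. -/
noncomputable def boxicity {V : Type*} (G : SimpleGraph V) : ℕ :=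
  sInf {k | IsBoxRep G k}

/-- The `k`-th bipartite power of `G`: join vertices at odd distance at most `k`. -/
def bipartitePower {V : Type*} (G : SimpleGraph V) (k : ℕ) : SimpleGraph V :=
  SimpleGraph.fromRel (fun u v => Odd (G.dist u v) ∧ G.dist u v ≤ k)

/-- Add to `G` all edges between distinct vertices of `B`. -/
def addCliqueOn {V : Type*} (G : SimpleGraph V) (B : Set V) : SimpleGraph V :=
  SimpleGraph.fromRel (fun u v => G.Adj u v ∨ (u ∈ B ∧ v ∈ B))

/-- `{A, B}` is a bipartition of `G`. -/
def IsBipartitionOf {V : Type*} (G : SimpleGraph V) (A B : Set V) : Prop :=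
  Disjoint A B ∧ A ∪ B = Set.univ ∧ ∀ u v, G.Adj u v → (u ∈ A ↔ v ∈ B)

/-- `G` has no induced cycle of length greater than `m`. -/
def HasNoInducedCycleGT {V : Type*} (G : SimpleGraph V) (m : ℕ) : Prop :=
  ∀ n : ℕ, m < n → IsEmpty (SimpleGraph.cycleGraph n ↪g G)

/-- Chordal bipartite graphs: bipartite with no induced cycle of length > 4. -/
def ChordalBipartite {V : Type*} (G : SimpleGraph V) : Prop :=
  (∃ A B : Set V, IsBipartitionOf G A B) ∧ HasNoInducedCycleGT G 4

/-- The closed neighbourhood `N[v]`. -/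
def closedNbhd {V : Type*} (G : SimpleGraph V) (v : V) : Set V :=
  insert v (G.neighborSet v)

/-- Two vertices are compatible if one closed neighbourhood contains the other. -/
def Compatible {V : Type*} (G : SimpleGraph V) (u v : V) : Prop :=
  closedNbhd G u ⊆ closedNbhd G v ∨ closedNbhd G v ⊆ closedNbhd G u

/-- A vertex is simple if all pairs in its closed neighbourhood are compatible. -/
def IsSimpleVertex {V : Type*} (G : SimpleGraph V) (v : V) : Prop :=
  ∀ x ∈ closedNbhd G v, ∀ y ∈ closedNbhd G v, Compatible G x y

/-- The function `g` with `g 1 = 2` and `g k = ((k+1)/2) * (g (k-2) - 1) + 1` for odd `k ≥ 3`. -/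
def g : ℕ → ℕ
  | 0 => 1
  | 1 => 2
  | (n + 2) => ((n + 3) / 2) * (g n - 1) + 1

/-- Vertices of the tree `T_k`: the root `none`, and `some (i, j)` for the `j`-th vertex of
layer `i + 1`, for `i < k + 1` and `j < g k`. -/
abbrev TkVert (k : ℕ) : Type := Option (Fin (k + 1) × Fin (g k))

/-- The tree `T_k`: the root is adjacent to all of layer 1, and `v_{i,j}` is adjacent to
`v_{i+1,j}`. -/
def Tk (k : ℕ) : SimpleGraph (TkVert k) :=
  SimpleGraph.fromRel (fun u v =>
    (∃ j, u = none ∧ v = some (0, j)) ∨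
    (∃ (i i' : Fin (k + 1)) (j : Fin (g k)),
      (i' : ℕ) = (i : ℕ) + 1 ∧ u = some (i, j) ∧ v = some (i', j)))

/-- The side `A` of the bipartition of `T_k`: the vertices in odd-numbered layers
(the root being in layer 0, and `some (i, j)` in layer `i + 1`). -/
def TkA (k : ℕ) : Set (TkVert k) :=
  {v | ∃ (i : Fin (k + 1)) (j : Fin (g k)), v = some (i, j) ∧ Even (i : ℕ)}

section FerrersPart

/-- Column-count function: `cols ℓ = g (2ℓ+1)`. -/
def cols : ℕ → ℕ
  | 0 => 2
  | (n + 1) => (n + 2) * (cols n - 1) + 1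

lemma cols_ge_two : ∀ n, 2 ≤ cols n := by
  intro n
  induction n with
  | zero => simp [cols]
  | succ n ih =>
    show 2 ≤ (n + 2) * (cols n - 1) + 1
    have h1 : 1 * 1 ≤ (n + 2) * (cols n - 1) :=
      Nat.mul_le_mul (by omega) (by omega)
    omega

/-- The main combinatorial lemma: a family of `m` Ferrers relations avoiding the edges of the
structure and covering its non-edges must have `m ≥ ℓ + 2`, provided there are at least
`cols ℓ` columns. -/
lemma ferrers_main : ∀ (ℓ : ℕ) (m : ℕ) (J : Finset ℕ) (R : ℕ → ℕ × ℕ → ℕ × ℕ → Prop),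
    cols ℓ ≤ J.card →
    (∀ i p q p' q', R i p q → R i p' q' → R i p q' ∨ R i p' q) →
    (∀ i j j' s t, j ∈ J → j' ∈ J → s ≤ ℓ → t ≤ ℓ → (j = j' ∨ s < t) → ¬ R i (j, s) (j', t)) →
    (∀ j j', j ∈ J → j' ∈ J → j ≠ j' → ∀ s t, t ≤ s → s ≤ ℓ → ∃ i, i < m ∧ R i (j, s) (j', t)) →
    ℓ + 2 ≤ m := by
  intro ℓ
  induction ℓ with
  | zero =>
    intro m J R hcard hferrers havoid hcover
    have hJ2 : 1 < J.card := by
      have h0 : cols 0 = 2 := rfl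
      omega
    obtain ⟨j0, hj0, j1, hj1, hne⟩ := Finset.one_lt_card.mp hJ2
    obtain ⟨i1, hi1, hR1⟩ := hcover j0 j1 hj0 hj1 hne 0 0 le_rfl le_rfl
    obtain ⟨i2, hi2, hR2⟩ := hcover j1 j0 hj1 hj0 (Ne.symm hne) 0 0 le_rfl le_rfl
    by_contra hm
    have hi12 : i1 = i2 := by omega
    rcases hferrers i1 (j0,0) (j1,0) (j1,0) (j0,0) hR1 (hi12 ▸ hR2) with h | h
    · exact havoid i1 j0 j0 0 0 hj0 hj0 le_rfl le_rfl (Or.inl rfl) h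
    · exact havoid i1 j1 j1 0 0 hj1 hj1 le_rfl le_rfl (Or.inl rfl) h
  | succ ℓ ih =>
    intro m J R hcard hferrers havoid hcover
    by_contra hm
    push_neg at hm
    have hm' : m ≤ ℓ + 2 := by omega
    have hJ2 : 1 < J.card := by
      have h1 := cols_ge_two (ℓ + 1)
      omega
    obtain ⟨j0, hj0, j1, hj1, hne01⟩ := Finset.one_lt_card.mp hJ2
    -- the partner column
    set c : ℕ → ℕ := fun j => if j = j0 then j1 else j0 with hc
    have hcmem : ∀ j, c j ∈ J := by
      intro j; simp only [hc]; split <;> assumption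
    have hcne : ∀ j, j ≠ c j := by
      intro j; simp only [hc]; split
      · subst ‹j = j0›; exact hne01
      · assumption
    -- the choice function: for each column, an index covering the top-level pair
    have hex : ∀ j ∈ J, ∃ i, i < m ∧ R i (j, ℓ+1) (c j, ℓ+1) := fun j hj =>
      hcover j (c j) hj (hcmem j) (hcne j) (ℓ+1) (ℓ+1) le_rfl le_rfl
    classical
    set f : ℕ → ℕ := fun j => if h : j ∈ J then (hex j h).choose else 0 with hf
    have hfspec : ∀ j ∈ J, f j < m ∧ R (f j) (j, ℓ+1) (c j, ℓ+1) := by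
      intro j hj; simp only [hf, dif_pos hj]; exact (hex j hj).choose_spec
    have hmaps : ∀ j ∈ J, f j ∈ Finset.range m := fun j hj =>
      Finset.mem_range.mpr (hfspec j hj).1
    have hmul : (Finset.range m).card * (cols ℓ - 1) < J.card := by
      have h2 : 2 ≤ cols ℓ := cols_ge_two ℓ
      have h3 : cols (ℓ+1) = (ℓ + 2) * (cols ℓ - 1) + 1 := rfl
      have hc2 : m * (cols ℓ - 1) ≤ (ℓ+2) * (cols ℓ - 1) := Nat.mul_le_mul_right _ hm'
      simp only [Finset.card_range]
      omega
    obtain ⟨i0, hi0r, hfib⟩ := Finset.exists_lt_card_fiber_of_mul_lt_card_of_maps_to hmaps hmul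
    set W : Finset ℕ := J.filter (fun j => f j = i0) with hW
    have hWsub : W ⊆ J := Finset.filter_subset _ _
    have hWcard : cols ℓ ≤ W.card := by
      have h2 := cols_ge_two ℓ; omega
    -- the exclusion lemma
    have hexcl : ∀ a j' s t, a ∈ W → j' ∈ W → s ≤ ℓ → t ≤ ℓ → ¬ R i0 (a, s) (j', t) := by
      intro a j' s t ha hj' hs ht hRa
      have hj'J : j' ∈ J := hWsub hj'
      have hfj' : f j' = i0 := (Finset.mem_filter.mp hj').2
      have htop : R i0 (j', ℓ+1) (c j', ℓ+1) := hfj' ▸ (hfspec j' hj'J).2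
      rcases hferrers i0 (a, s) (j', t) (j', ℓ+1) (c j', ℓ+1) hRa htop with h | h
      · exact havoid i0 a (c j') s (ℓ+1) (hWsub ha) (hcmem j') (by omega) le_rfl
          (Or.inr (by omega)) h
      · exact havoid i0 j' j' (ℓ+1) t (hWsub hj') hj'J le_rfl (by omega) (Or.inl rfl) h
    -- reindexing
    set R' : ℕ → ℕ × ℕ → ℕ × ℕ → Prop := fun i => R (if i < i0 then i else i + 1) with hR'
    have hi0m : i0 < m := by
      have hWne : W.Nonempty := Finset.card_pos.mp (by have := cols_ge_two ℓ; omega)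
      obtain ⟨j, hj⟩ := hWne
      have := (hfspec j (hWsub hj)).1
      rwa [(Finset.mem_filter.mp hj).2] at this
    have := ih (m - 1) W R' hWcard
      (fun i p q p' q' => hferrers _ p q p' q')
      (fun i j j' s t hj hj' hs ht he =>
        havoid _ j j' s t (hWsub hj) (hWsub hj') (by omega) (by omega) he)
      (by
        intro j j' hj hj' hjj s t hts hs
        obtain ⟨i, him, hRi⟩ := hcover j j' (hWsub hj) (hWsub hj') hjj s t hts (by omega)
        have hine : i ≠ i0 := fun h => hexcl j j' s t hj hj' hs (le_trans hts hs) (h ▸ hRi)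
        by_cases hlt : i < i0
        · exact ⟨i, by omega, by simpa only [hR', if_pos hlt] using hRi⟩
        · refine ⟨i - 1, by omega, ?_⟩
          have hnlt : ¬ (i - 1 < i0) := by omega
          simp only [hR', if_neg hnlt]
          have hi1 : i - 1 + 1 = i := by omega
          rw [hi1]; exact hRi)
    omega

lemma g_eq_cols : ∀ n, g (2*n+1) = cols n := by
  intro n
  induction n with
  | zero => rfl
  | succ n ih =>
    have h1 : 2*(n+1)+1 = (2*n+1)+2 := by ring
    rw [h1]
    simp only [g]
    rw [ih]
    have h2 : (2*n+1+3)/2 = n+2 := by omega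
    rw [h2]
    rfl

end FerrersPart

namespace Stmt10Aux

variable {k : ℕ}

lemma g_pos : ∀ n, 0 < g n
  | 0 => by simp [g]
  | 1 => by simp [g]
  | (n+2) => by simp [g]

/-- The layer-height of a vertex of `T_k`. -/
def ht : TkVert k → ℕ
  | none => 0
  | some p => p.1.val + 1

lemma tk_adj_cases {u v : TkVert k} (h : (Tk k).Adj u v) :
    (∃ j, (u = none ∧ v = some (0, j)) ∨ (v = none ∧ u = some (0, j))) ∨
    (∃ (i i' : Fin (k+1)) (j : Fin (g k)), (i' : ℕ) = (i : ℕ) + 1 ∧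
      ((u = some (i,j) ∧ v = some (i',j)) ∨ (v = some (i,j) ∧ u = some (i',j)))) := by
  rw [Tk, SimpleGraph.fromRel_adj] at h
  rcases h.2 with (⟨j, h1, h2⟩ | ⟨i, i', j, hi, h1, h2⟩) | (⟨j, h1, h2⟩ | ⟨i, i', j, hi, h1, h2⟩)
  · exact Or.inl ⟨j, Or.inl ⟨h1, h2⟩⟩
  · exact Or.inr ⟨i, i', j, hi, Or.inl ⟨h1, h2⟩⟩
  · exact Or.inl ⟨j, Or.inr ⟨h1, h2⟩⟩
  · exact Or.inr ⟨i, i', j, hi, Or.inr ⟨h1, h2⟩⟩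

lemma adj_root (j : Fin (g k)) : (Tk k).Adj none (some (0, j)) := by
  rw [Tk, SimpleGraph.fromRel_adj]
  exact ⟨by simp, Or.inl (Or.inl ⟨j, rfl, rfl⟩)⟩

lemma adj_step (a : ℕ) (ha : a + 1 < k + 1) (j : Fin (g k)) :
    (Tk k).Adj (some (⟨a, by omega⟩, j)) (some (⟨a+1, ha⟩, j)) := by
  rw [Tk, SimpleGraph.fromRel_adj]
  refine ⟨?_, Or.inl (Or.inr ⟨⟨a, by omega⟩, ⟨a+1, ha⟩, j, rfl, rfl, rfl⟩)⟩
  simp only [ne_eq, Option.some.injEq, Prod.mk.injEq, Fin.mk.injEq]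
  omega

lemma adj_ht {u v : TkVert k} (h : (Tk k).Adj u v) : ht v = ht u + 1 ∨ ht u = ht v + 1 := by
  rcases tk_adj_cases h with ⟨j, (⟨h1,h2⟩|⟨h1,h2⟩)⟩ | ⟨i, i', j, hi, (⟨h1,h2⟩|⟨h1,h2⟩)⟩ <;>
    subst h1 <;> subst h2 <;> simp [ht] <;> omega

lemma adj_col {i i' : Fin (k+1)} {j j' : Fin (g k)}
    (h : (Tk k).Adj (some (i,j)) (some (i',j'))) : j' = j := by
  rcases tk_adj_cases h with ⟨j'', (⟨h1,_⟩|⟨h1,_⟩)⟩ | ⟨a, b, j'', _, (⟨h1,h2⟩|⟨h1,h2⟩)⟩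
  · exact absurd h1 (by simp)
  · exact absurd h1 (by simp)
  · simp only [Option.some.injEq, Prod.mk.injEq] at h1 h2
    rw [h2.2, h1.2]
  · simp only [Option.some.injEq, Prod.mk.injEq] at h1 h2
    rw [h1.2, h2.2]

lemma ht_le_of_walk {u v : TkVert k} (p : (Tk k).Walk u v) :
    (ht u : ℤ) ≤ ht v + p.length := by
  induction p with
  | nil => simp
  | cons h p ih =>
    have h1 := adj_ht h
    rw [SimpleGraph.Walk.length_cons]
    push_cast at ih ⊢
    omega

lemma walk_from_root : ∀ (n : ℕ) (i : Fin (k+1)) (j : Fin (g k)), i.val = n →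
    ∃ p : (Tk k).Walk none (some (i, j)), p.length = n + 1 := by
  intro n
  induction n with
  | zero =>
    intro i j hi
    have h0 : i = 0 := Fin.ext (by simp [hi])
    subst h0
    exact ⟨SimpleGraph.Walk.cons (adj_root j) SimpleGraph.Walk.nil, by simp⟩
  | succ n ihn =>
    intro i j hi
    have hn : n < k + 1 := by have := i.isLt; omega
    obtain ⟨p, hp⟩ := ihn ⟨n, hn⟩ j rfl
    have ha : n + 1 < k + 1 := by have := i.isLt; omega
    have h0 : i = ⟨n+1, ha⟩ := Fin.ext (by simp [hi])
    subst h0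
    exact ⟨p.concat (adj_step n ha j), by
      simp [SimpleGraph.Walk.length_concat, hp]⟩

lemma walk_same_col : ∀ (d : ℕ) (i i' : Fin (k+1)) (j : Fin (g k)), i.val + d = i'.val →
    ∃ p : (Tk k).Walk (some (i,j)) (some (i',j)), p.length = d := by
  intro d
  induction d with
  | zero =>
    intro i i' j h
    have h0 : i = i' := Fin.ext (by omega)
    subst h0
    exact ⟨SimpleGraph.Walk.nil, rfl⟩
  | succ d ihd =>
    intro i i' j h
    have hmid : i.val + d < k + 1 := by have := i'.isLt; omega
    obtain ⟨p, hp⟩ := ihd i ⟨i.val + d, hmid⟩ j rfl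
    have ha : i.val + d + 1 < k + 1 := by have := i'.isLt; omega
    have h0 : i' = ⟨i.val + d + 1, ha⟩ := Fin.ext (by simp; omega)
    subst h0
    exact ⟨p.concat (adj_step (i.val + d) ha j), by
      simp [SimpleGraph.Walk.length_concat, hp]⟩

lemma passes_root {u v : TkVert k} (p : (Tk k).Walk u v) :
    ∀ (i i' : Fin (k+1)) (j j' : Fin (g k)), u = some (i,j) → v = some (i',j') → j ≠ j' →
    (none : TkVert k) ∈ p.support := by
  induction p with
  | nil =>
    intro i i' j j' hu hv hne
    rw [hu] at hv
    simp only [Option.some.injEq, Prod.mk.injEq] at hv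
    exact absurd hv.2 hne
  | @cons a b c h q ih =>
    intro i i' j j' hu hv hne
    subst hu
    rw [SimpleGraph.Walk.support_cons]
    rcases b with _ | ⟨ib, jb⟩
    · exact List.mem_cons_of_mem _ q.start_mem_support
    · have hcol : jb = j := adj_col h
      exact List.mem_cons_of_mem _ (ih ib i' jb j' rfl hv (hcol.symm ▸ hne))

lemma dist_same_col (i i' : Fin (k+1)) (j : Fin (g k)) (h : i.val ≤ i'.val) :
    (Tk k).dist (some (i,j)) (some (i',j)) = i'.val - i.val := by
  obtain ⟨p, hp⟩ := walk_same_col (i'.val - i.val) i i' j (by omega)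
  refine le_antisymm (hp ▸ SimpleGraph.dist_le p) ?_
  obtain ⟨q, hq⟩ := (p.reachable).exists_walk_length_eq_dist
  have h1 := ht_le_of_walk q.reverse
  rw [SimpleGraph.Walk.length_reverse] at h1
  simp only [ht] at h1
  omega

lemma dist_cross (i i' : Fin (k+1)) (j j' : Fin (g k)) (hne : j ≠ j') :
    (Tk k).dist (some (i,j)) (some (i',j')) = i.val + i'.val + 2 := by
  obtain ⟨p1, hp1⟩ := walk_from_root i.val i j rfl
  obtain ⟨p2, hp2⟩ := walk_from_root i'.val i' j' rfl
  have hlen : (p1.reverse.append p2).length = i.val + 1 + (i'.val + 1) := by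
    rw [SimpleGraph.Walk.length_append, SimpleGraph.Walk.length_reverse, hp1, hp2]
  refine le_antisymm (by have := SimpleGraph.dist_le (p1.reverse.append p2); omega) ?_
  obtain ⟨q, hq⟩ := ((p1.reverse.append p2).reachable).exists_walk_length_eq_dist
  have hmem : (none : TkVert k) ∈ q.support := passes_root q i i' j j' rfl rfl hne
  have hsplit : (q.takeUntil none hmem).length + (q.dropUntil none hmem).length = q.length := by
    rw [← SimpleGraph.Walk.length_append, SimpleGraph.Walk.take_spec]
  have h1 := ht_le_of_walk (q.takeUntil none hmem)
  have h2 := ht_le_of_walk (q.dropUntil none hmem).reverse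
  rw [SimpleGraph.Walk.length_reverse] at h2
  simp only [ht] at h1 h2
  omega

lemma bp_adj {V : Type*} (G : SimpleGraph V) (n : ℕ) (u v : V) :
    (bipartitePower G n).Adj u v ↔
      u ≠ v ∧ Odd (G.dist u v) ∧ G.dist u v ≤ n := by
  rw [bipartitePower, SimpleGraph.fromRel_adj]
  constructor
  · rintro ⟨hne, h | h⟩
    · exact ⟨hne, h⟩
    · rw [SimpleGraph.dist_comm] at h
      exact ⟨hne, h⟩
  · rintro ⟨hne, h⟩
    exact ⟨hne, Or.inl h⟩

lemma exists_boxRep {V : Type*} [Fintype V] (G : SimpleGraph V) :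
    ∃ N, IsBoxRep G N := by
  classical
  set N := Fintype.card (V × V) with hN
  set e : Fin N ≃ V × V := (Fintype.equivFin (V × V)).symm with he
  set lo : V → Fin N → ℝ := fun v i =>
    if ¬ G.Adj (e i).1 (e i).2 ∧ (e i).1 ≠ (e i).2 ∧ v = (e i).2 then 2 else 0 with hlo
  set hi : V → Fin N → ℝ := fun v i =>
    if ¬ G.Adj (e i).1 (e i).2 ∧ (e i).1 ≠ (e i).2 ∧ v = (e i).1 then 0 else 2 with hhi
  have hlo2 : ∀ v i, lo v i = 2 → ¬ G.Adj (e i).1 (e i).2 ∧ (e i).1 ≠ (e i).2 ∧ v = (e i).2 := by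
    intro v i hv
    simp only [hlo] at hv
    split_ifs at hv with hc
    · exact hc
    · norm_num at hv
  have hhi0 : ∀ v i, hi v i = 0 → ¬ G.Adj (e i).1 (e i).2 ∧ (e i).1 ≠ (e i).2 ∧ v = (e i).1 := by
    intro v i hv
    simp only [hhi] at hv
    split_ifs at hv with hc
    · exact hc
    · norm_num at hv
  have hkey : ∀ v i, (lo v i = 0 ∨ lo v i = 2) ∧ (hi v i = 0 ∨ hi v i = 2) := by
    intro v i
    constructor <;> simp only [hlo, hhi] <;> split_ifs <;> simp
  have hmain : ∀ v i, lo v i ≤ hi v i := by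
    intro v i
    rcases (hkey v i).1 with h1 | h1 <;> rcases (hkey v i).2 with h2 | h2 <;>
      rw [h1, h2] <;> try norm_num
    obtain ⟨hna, hne, hvq⟩ := hlo2 v i h1
    obtain ⟨_, _, hvp⟩ := hhi0 v i h2
    exact absurd (hvp.symm.trans hvq) hne
  refine ⟨N, lo, hi, hmain, fun u v => ⟨fun hadj => ⟨G.ne_of_adj hadj, fun i => ?_⟩, ?_⟩⟩
  · have hc1 : lo u i ≤ hi v i := by
      by_contra hcon
      push_neg at hcon
      rcases (hkey u i).1 with h1 | h1 <;> rcases (hkey v i).2 with h2 | h2 <;>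
          rw [h1, h2] at hcon <;> try norm_num at hcon
      obtain ⟨hna, hne, huq⟩ := hlo2 u i h1
      obtain ⟨_, _, hvp⟩ := hhi0 v i h2
      rw [huq, hvp] at hadj
      exact hna (G.adj_symm hadj)
    have hc2 : lo v i ≤ hi u i := by
      by_contra hcon
      push_neg at hcon
      rcases (hkey v i).1 with h1 | h1 <;> rcases (hkey u i).2 with h2 | h2 <;>
          rw [h1, h2] at hcon <;> try norm_num at hcon
      obtain ⟨hna, hne, hvq⟩ := hlo2 v i h1
      obtain ⟨_, _, hup⟩ := hhi0 u i h2
      rw [hvq, hup] at hadj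
      exact hna hadj
    exact ⟨max (lo u i) (lo v i),
      ⟨le_max_left _ _, max_le (hmain u i) hc2⟩,
      ⟨le_max_right _ _, max_le hc1 (hmain v i)⟩⟩
  · rintro ⟨hne, hall⟩
    by_contra hnadj
    obtain ⟨z, hz1, hz2⟩ := hall (e.symm (u, v))
    have heq : e (e.symm (u, v)) = (u, v) := e.apply_symm_apply _
    have hzu : z ≤ hi u (e.symm (u,v)) := hz1.2
    have hzv : lo v (e.symm (u,v)) ≤ z := hz2.1
    have h1 : hi u (e.symm (u,v)) = 0 := by
      simp only [hhi, heq]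
      rw [if_pos ⟨hnadj, hne, trivial⟩]
    have h2 : lo v (e.symm (u,v)) = 2 := by
      simp only [hlo, heq]
      rw [if_pos ⟨hnadj, hne, trivial⟩]
    rw [h1] at hzu
    rw [h2] at hzv
    linarith

end Stmt10Aux

open Fin.NatCast in
theorem stmt10 (k : ℕ) (hk : Odd k) :
    (k + 1) / 4 < boxicity (bipartitePower (Tk k) k) := by
  classical
  obtain ⟨ℓ, hkl⟩ := hk
  have hlow : ∀ m, IsBoxRep (bipartitePower (Tk k) k) m → (k + 1) / 4 < m := by
    intro m hrep
    by_contra hle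
    push_neg at hle
    obtain ⟨lo, hi, hlohi, hiff⟩ := hrep
    have hgpos : 0 < g k := Stmt10Aux.g_pos k
    haveI : NeZero (g k) := ⟨by omega⟩
    -- the vertices of the substructure
    set xv : ℕ → ℕ → TkVert k := fun j s =>
      some (((2*s : ℕ) : Fin (k+1)), ((j : ℕ) : Fin (g k))) with hxv
    set yv : ℕ → ℕ → TkVert k := fun j t =>
      some (((k - 2*t : ℕ) : Fin (k+1)), ((j : ℕ) : Fin (g k))) with hyv
    have hxval : ∀ s, s ≤ ℓ → ((2*s : ℕ) : Fin (k+1)).val = 2*s := by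
      intro s hs
      rw [Fin.val_natCast]
      exact Nat.mod_eq_of_lt (by omega)
    have hyval : ∀ t, t ≤ ℓ → ((k - 2*t : ℕ) : Fin (k+1)).val = k - 2*t := by
      intro t ht
      rw [Fin.val_natCast]
      exact Nat.mod_eq_of_lt (by omega)
    have hjval : ∀ j, j < g k → ((j : ℕ) : Fin (g k)).val = j := by
      intro j hj
      rw [Fin.val_natCast]
      exact Nat.mod_eq_of_lt hj
    -- distinctness
    have hneq : ∀ j j' s t, s ≤ ℓ → t ≤ ℓ → xv j s ≠ yv j' t := by
      intro j j' s t hs ht hcon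
      simp only [hxv, hyv, Option.some.injEq, Prod.mk.injEq] at hcon
      have h1 := congrArg Fin.val hcon.1
      rw [hxval s hs, hyval t ht] at h1
      omega
    -- same-column adjacency
    have hadj_same : ∀ j s t, j < g k → s ≤ ℓ → t ≤ ℓ →
        (bipartitePower (Tk k) k).Adj (xv j s) (yv j t) := by
      intro j s t hj hs ht
      rw [Stmt10Aux.bp_adj]
      refine ⟨hneq j j s t hs ht, ?_⟩
      simp only [hxv, hyv]
      by_cases hc : 2*s ≤ k - 2*t
      · have hd := Stmt10Aux.dist_same_col (k := k) ((2*s : ℕ) : Fin (k+1))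
          ((k - 2*t : ℕ) : Fin (k+1)) ((j : ℕ) : Fin (g k))
          (by rw [hxval s hs, hyval t ht]; exact hc)
        rw [hd, hxval s hs, hyval t ht]
        exact ⟨⟨ℓ - t - s, by omega⟩, by omega⟩
      · have hd := Stmt10Aux.dist_same_col (k := k) ((k - 2*t : ℕ) : Fin (k+1))
          ((2*s : ℕ) : Fin (k+1)) ((j : ℕ) : Fin (g k))
          (by rw [hxval s hs, hyval t ht]; omega)
        rw [SimpleGraph.dist_comm, hd, hxval s hs, hyval t ht]
        exact ⟨⟨s + t - ℓ - 1, by omega⟩, by omega⟩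
    -- cross-column adjacency
    have hadj_cross : ∀ j j' s t, j < g k → j' < g k → j ≠ j' → s ≤ ℓ → t ≤ ℓ →
        ((bipartitePower (Tk k) k).Adj (xv j s) (yv j' t) ↔ s < t) := by
      intro j j' s t hj hj' hjj hs ht
      have hne2 : ((j : ℕ) : Fin (g k)) ≠ ((j' : ℕ) : Fin (g k)) := by
        intro hcon
        have := congrArg Fin.val hcon
        rw [hjval j hj, hjval j' hj'] at this
        exact hjj this
      have hd := Stmt10Aux.dist_cross (k := k) ((2*s : ℕ) : Fin (k+1))
        ((k - 2*t : ℕ) : Fin (k+1)) ((j : ℕ) : Fin (g k)) ((j' : ℕ) : Fin (g k)) hne2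
      rw [Stmt10Aux.bp_adj]
      simp only [hxv, hyv]
      rw [hd, hxval s hs, hyval t ht]
      constructor
      · rintro ⟨-, -, hle2⟩
        omega
      · intro hst
        refine ⟨?_, ⟨s + (ℓ - t) + 1, by omega⟩, by omega⟩
        simp only [ne_eq, Option.some.injEq, Prod.mk.injEq, not_and]
        intro _ hcol
        exact hne2 hcol
    -- the Ferrers relations induced by the box representation
    set R : ℕ → ℕ × ℕ → ℕ × ℕ → Prop := fun i p q =>
      (∃ d : Fin m, i = 2 * d.val ∧ hi (xv p.1 p.2) d < lo (yv q.1 q.2) d) ∨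
      (∃ d : Fin m, i = 2 * d.val + 1 ∧ hi (yv q.1 q.2) d < lo (xv p.1 p.2) d) with hR
    have hferrers : ∀ i p q p' q', R i p q → R i p' q' → R i p q' ∨ R i p' q := by
      intro i p q p' q' h1 h2
      simp only [hR] at h1 h2 ⊢
      rcases h1 with ⟨d, hd, hlt⟩ | ⟨d, hd, hlt⟩ <;>
        rcases h2 with ⟨d', hd', hlt'⟩ | ⟨d', hd', hlt'⟩
      · have hdd : d = d' := Fin.ext (by omega)
        subst hdd
        by_cases hcase : hi (xv p.1 p.2) d < lo (yv q'.1 q'.2) d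
        · exact Or.inl (Or.inl ⟨d, hd, hcase⟩)
        · push_neg at hcase
          exact Or.inr (Or.inl ⟨d, hd, by linarith⟩)
      · exact absurd hd' (by omega)
      · exact absurd hd' (by omega)
      · have hdd : d = d' := Fin.ext (by omega)
        subst hdd
        by_cases hcase : hi (yv q'.1 q'.2) d < lo (xv p.1 p.2) d
        · exact Or.inl (Or.inr ⟨d, hd, hcase⟩)
        · push_neg at hcase
          exact Or.inr (Or.inr ⟨d, hd, by linarith⟩)
    have havoid : ∀ i j j' s t, j ∈ Finset.range (g k) → j' ∈ Finset.range (g k) →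
        s ≤ ℓ → t ≤ ℓ → (j = j' ∨ s < t) → ¬ R i (j, s) (j', t) := by
      intro i j j' s t hj hj' hs ht hedge hRi
      have hjlt := Finset.mem_range.mp hj
      have hj'lt := Finset.mem_range.mp hj'
      have hadj : (bipartitePower (Tk k) k).Adj (xv j s) (yv j' t) := by
        rcases hedge with rfl | hst
        · exact hadj_same j s t hjlt hs ht
        · by_cases hjj : j = j'
          · subst hjj
            exact hadj_same j s t hjlt hs ht
          · exact (hadj_cross j j' s t hjlt hj'lt hjj hs ht).mpr hst
      obtain ⟨-, hall⟩ := (hiff _ _).mp hadj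
      simp only [hR] at hRi
      rcases hRi with ⟨d, -, hlt⟩ | ⟨d, -, hlt⟩
      · obtain ⟨z, hz1, hz2⟩ := hall d
        linarith [hz1.2, hz2.1]
      · obtain ⟨z, hz1, hz2⟩ := hall d
        linarith [hz1.1, hz2.2]
    have hcover : ∀ j j', j ∈ Finset.range (g k) → j' ∈ Finset.range (g k) → j ≠ j' →
        ∀ s t, t ≤ s → s ≤ ℓ → ∃ i, i < 2*m ∧ R i (j, s) (j', t) := by
      intro j j' hj hj' hjj s t hts hs
      have hjlt := Finset.mem_range.mp hj
      have hj'lt := Finset.mem_range.mp hj'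
      have ht : t ≤ ℓ := le_trans hts hs
      have hnadj : ¬ (bipartitePower (Tk k) k).Adj (xv j s) (yv j' t) := by
        rw [hadj_cross j j' s t hjlt hj'lt hjj hs ht]
        omega
      have hne := hneq j j' s t hs ht
      have hnall : ¬ (xv j s ≠ yv j' t ∧ ∀ d, (Set.Icc (lo (xv j s) d) (hi (xv j s) d) ∩
          Set.Icc (lo (yv j' t) d) (hi (yv j' t) d)).Nonempty) :=
        fun hc => hnadj ((hiff _ _).mpr hc)
      push_neg at hnall
      obtain ⟨d, hd⟩ := hnall hne
      by_cases hcase : hi (xv j s) d < lo (yv j' t) d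
      · exact ⟨2*d.val, by have := d.isLt; omega, Or.inl ⟨d, rfl, hcase⟩⟩
      · refine ⟨2*d.val+1, by have := d.isLt; omega, Or.inr ⟨d, rfl, ?_⟩⟩
        by_contra hcase2
        push_neg at hcase hcase2
        have hmem : max (lo (xv j s) d) (lo (yv j' t) d) ∈
            Set.Icc (lo (xv j s) d) (hi (xv j s) d) ∩
              Set.Icc (lo (yv j' t) d) (hi (yv j' t) d) :=
          ⟨⟨le_max_left _ _, max_le (hlohi _ _) hcase⟩,
           ⟨le_max_right _ _, max_le hcase2 (hlohi _ _)⟩⟩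
        rw [hd] at hmem
        exact hmem
    have hcols : g k = cols ℓ := by
      rw [hkl]
      exact g_eq_cols ℓ
    have hcard : cols ℓ ≤ (Finset.range (g k)).card := by
      rw [Finset.card_range, hcols]
    have hfm := ferrers_main ℓ (2*m) (Finset.range (g k)) R hcard hferrers havoid hcover
    omega
  obtain ⟨N, hN⟩ := Stmt10Aux.exists_boxRep (bipartitePower (Tk k) k)
  have hne : {n | IsBoxRep (bipartitePower (Tk k) k) n}.Nonempty := ⟨N, hN⟩
  exact hlow _ (Nat.sInf_mem hne)
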